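/- For every n ≥ 5, the arrangement K'_{⌊n/2⌋,n} can be transformed into the arrangement B_n in exactly 2n−7 LRE moves when n is even, and in exactly 2n−5 LRE moves when n is odd; that is, there exist that many generators g_1, g_2, … ∈ G with K'_{⌊n/2⌋,n} ∘ g_1 ∘ ⋯ = B_n. -/

import Mathlib

set_option maxHeartbeats 1000000

/-- Auxiliary: the word `(a b)^k` as an explicit list. -/
def lreWord {M : Type*} (a b : M) : ℕ → List M
  | 0 => []
  | k + 1 => a :: b :: lreWord a b k

theorem lreWord_length {M : Type*} (a b : M) : ∀ k, (lreWord a b k).length = 2 * k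
  | 0 => rfl
  | k + 1 => by simp [lreWord, lreWord_length a b k]; omega

theorem lreWord_prod {M : Type*} [Monoid M] (a b : M) :
    ∀ k, (lreWord a b k).prod = (a * b) ^ k
  | 0 => by simp [lreWord]
  | k + 1 => by
    simp [lreWord, lreWord_prod a b k, pow_succ', mul_assoc]

theorem lreWord_mem {M : Type*} (a b : M) :
    ∀ k, ∀ g ∈ lreWord a b k, g = a ∨ g = b
  | 0 => by simp [lreWord]
  | k + 1 => by
    intro g hg
    simp only [lreWord, List.mem_cons] at hg
    rcases hg with rfl | rfl | hg
    · exact Or.inl rfl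
    · exact Or.inr rfl
    · exact lreWord_mem a b k g hg

/-- For every `n ≥ 5`, the arrangement `K'_{⌊n/2⌋,n}` can be transformed into the
arrangement `B_n` in exactly `2n - 7` LRE moves when `n` is even and `2n - 5` moves when
`n` is odd.  Permutations of `{1,…,n}` are modelled as `Equiv.Perm (Fin n)` with
`i : Fin n` representing the 1-based index `(i : ℕ) + 1`: `σ` is the left-rotation,
`τ` the transposition of the first two positions; with `r = ⌊n/2⌋`, `K' = K'_{r,n}`
sends `i ↦ n - r + 1 - i` for `1 ≤ i ≤ n - r` and `i ↦ i` for `n - r < i ≤ n`; with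
`c = ⌈n/2⌉ = (n+1)/2`, the arrangement `B = B_n` satisfies `B(1) = 1`,
`B(i) = c + 1 - i` for `2 ≤ i ≤ c - 1`, and `B(i) = i` for `c ≤ i ≤ n`.
A move multiplies on the right by an element of `G = {σ, σ⁻¹, τ}`. -/
theorem Kprime_to_B (n : ℕ) (hn : 5 ≤ n)
    (σ τ K' B : Equiv.Perm (Fin n))
    (hσ : ∀ i : Fin n, (σ i : ℕ) = ((i : ℕ) + 1) % n)
    (hτ : ∀ i : Fin n, (τ i : ℕ) =
      if (i : ℕ) = 0 then 1 else if (i : ℕ) = 1 then 0 else (i : ℕ))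
    (hK' : ∀ i : Fin n, (K' i : ℕ) =
      if (i : ℕ) < n - n / 2 then n - n / 2 - 1 - (i : ℕ) else (i : ℕ))
    (hB : ∀ i : Fin n, (B i : ℕ) =
      if (i : ℕ) = 0 then 0
      else if (i : ℕ) < (n + 1) / 2 - 1 then (n + 1) / 2 - 1 - (i : ℕ)
      else (i : ℕ)) :
    ∃ gs : List (Equiv.Perm (Fin n)),
      (n % 2 = 0 → gs.length = 2 * n - 7) ∧
      (n % 2 = 1 → gs.length = 2 * n - 5) ∧
      (∀ g ∈ gs, g = σ ∨ g = σ⁻¹ ∨ g = τ) ∧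
      K' * gs.prod = B := by
  -- branch-free description of σ
  have hσn : ∀ i : Fin n, (σ i : ℕ) = if (i : ℕ) + 1 = n then 0 else (i : ℕ) + 1 := by
    intro i
    have hi := i.isLt
    rw [hσ]
    split_ifs with h
    · rw [h, Nat.mod_self]
    · exact Nat.mod_eq_of_lt (by omega)
  -- description of σ⁻¹
  have hσi : ∀ i : Fin n, ((σ⁻¹ i : ℕ)) = if (i : ℕ) = 0 then n - 1 else (i : ℕ) - 1 := by
    intro i
    have h := hσn (σ⁻¹ i)
    rw [← Equiv.Perm.mul_apply, mul_inv_cancel, Equiv.Perm.one_apply] at h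
    have h1 := (σ⁻¹ i).isLt
    have h2 := i.isLt
    split_ifs at h ⊢ <;> omega
  -- value of σ ∘ τ
  have hστ : ∀ x : Fin n, (((σ * τ) x : ℕ)) =
      if (x : ℕ) = 0 then 2 else if (x : ℕ) = 1 then 1
      else if (x : ℕ) + 1 = n then 0 else (x : ℕ) + 1 := by
    intro x
    have hx := x.isLt
    rw [Equiv.Perm.mul_apply, hσn, hτ]
    split_ifs <;> first | (exfalso; exact ‹False›) | omega
  -- value of σ⁻¹ ∘ τ
  have hσiτ : ∀ x : Fin n, (((σ⁻¹ * τ) x : ℕ)) =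
      if (x : ℕ) = 0 then 0 else if (x : ℕ) = 1 then n - 1 else (x : ℕ) - 1 := by
    intro x
    have hx := x.isLt
    rw [Equiv.Perm.mul_apply, hσi, hτ]
    split_ifs <;> first | (exfalso; exact ‹False›) | omega
  -- the key product: (στ)^k (σ⁻¹τ)^k is the 3-cycle (0, k+1, 1)
  have hV : ∀ k, 1 ≤ k → k + 2 < n → ∀ x : Fin n,
      ((((σ * τ) ^ k * (σ⁻¹ * τ) ^ k) x : ℕ)) =
        if (x : ℕ) = 0 then k + 1 else if (x : ℕ) = 1 then 0
        else if (x : ℕ) = k + 1 then 1 else (x : ℕ) := by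
    intro k
    induction k with
    | zero => omega
    | succ k ih =>
      intro _ hk2 x
      have hx := x.isLt
      rcases Nat.eq_zero_or_pos k with rfl | hk
      · simp only [pow_succ, pow_zero, one_mul]
        rw [Equiv.Perm.mul_apply, hστ, hσiτ]
        split_ifs <;> first | (exfalso; exact ‹False›) | omega
      · have h1 : (σ * τ) ^ (k + 1) * (σ⁻¹ * τ) ^ (k + 1) =
            (σ * τ) * (((σ * τ) ^ k * (σ⁻¹ * τ) ^ k) * (σ⁻¹ * τ)) := by
          rw [pow_succ' (σ * τ) k, pow_succ (σ⁻¹ * τ) k]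
          simp only [mul_assoc]
        have e : (((σ * τ) ^ (k + 1) * (σ⁻¹ * τ) ^ (k + 1)) x : ℕ) =
            (((σ * τ) ((((σ * τ) ^ k * (σ⁻¹ * τ) ^ k)) ((σ⁻¹ * τ) x))) : ℕ) := by
          rw [h1]
          rfl
        rw [e, hστ, ih hk (by omega), hσiτ]
        split_ifs <;> first | (exfalso; exact ‹False›) | omega
  -- parameters
  set K : ℕ := (n + 1) / 2 - 2 with hK
  have hK1 : 1 ≤ K := by omega
  have hK2 : K + 2 < n := by omega
  refine ⟨τ :: (lreWord σ τ K ++ lreWord σ⁻¹ τ K), ?_, ?_, ?_, ?_⟩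
  · intro he
    simp only [List.length_cons, List.length_append, lreWord_length]
    omega
  · intro ho
    simp only [List.length_cons, List.length_append, lreWord_length]
    omega
  · intro g hg
    simp only [List.mem_cons, List.mem_append] at hg
    rcases hg with rfl | hg | hg
    · exact Or.inr (Or.inr rfl)
    · rcases lreWord_mem σ τ K g hg with rfl | rfl
      · exact Or.inl rfl
      · exact Or.inr (Or.inr rfl)
    · rcases lreWord_mem σ⁻¹ τ K g hg with rfl | rfl
      · exact Or.inr (Or.inl rfl)
      · exact Or.inr (Or.inr rfl)
  · have hprod : (τ :: (lreWord σ τ K ++ lreWord σ⁻¹ τ K)).prod =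
        τ * ((σ * τ) ^ K * (σ⁻¹ * τ) ^ K) := by
      rw [List.prod_cons, List.prod_append, lreWord_prod, lreWord_prod]
    apply Equiv.ext
    intro x
    apply Fin.val_injective
    have hx := x.isLt
    have e : (((K' * (τ :: (lreWord σ τ K ++ lreWord σ⁻¹ τ K)).prod) x) : ℕ) =
        ((K' (τ (((σ * τ) ^ K * (σ⁻¹ * τ) ^ K) x))) : ℕ) := by
      rw [hprod]; rfl
    rw [e, hK', hτ, hV K hK1 hK2, hB]
    split_ifs <;> first | (exfalso; exact ‹False›) | omega
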